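/- Let p be a partition of a disjoint union [k] ⊔ [l] (k upper points, l lower points). Define the strict order ≺ on global-outer blocks by: upper single-layer blocks first (ordered by decreasing maximum), then the through-blocks, then lower single-layer blocks (ordered by increasing maximum). Then ≺ is a strict total order on the set of global-outer blocks of p. -/

import Mathlib

namespace Stmt7

/-- A block (given by its upper-row part and lower-row part) is upper single-layer. -/
def UpperSL (B : Finset ℕ × Finset ℕ) : Prop := B.1.Nonempty ∧ B.2 = ∅

/-- A block is lower single-layer. -/
def LowerSL (B : Finset ℕ × Finset ℕ) : Prop := B.1 = ∅ ∧ B.2.Nonempty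

/-- The span of a block, as a set of points `(0, i)` (upper row) and `(1, j)` (lower row):
for a through-block it is the union of the initial segments of the two rows up to the
respective maxima; for a single-layer block it is the interval `[min B, max B]` of its row. -/
def Span (B : Finset ℕ × Finset ℕ) : Set (ℕ × ℕ) :=
  {x | (B.1.Nonempty ∧ B.2.Nonempty ∧
          ((x.1 = 0 ∧ 1 ≤ x.2 ∧ ∃ m ∈ B.1, x.2 ≤ m) ∨
           (x.1 = 1 ∧ 1 ≤ x.2 ∧ ∃ m ∈ B.2, x.2 ≤ m))) ∨
       (B.1.Nonempty ∧ B.2 = ∅ ∧ x.1 = 0 ∧ (∃ a ∈ B.1, a ≤ x.2) ∧ ∃ b ∈ B.1, x.2 ≤ b) ∨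
       (B.1 = ∅ ∧ B.2.Nonempty ∧ x.1 = 1 ∧ (∃ a ∈ B.2, a ≤ x.2) ∧ ∃ b ∈ B.2, x.2 ≤ b)}

/-- A block of `p` is global-outer if its span is not strictly contained in the span of
any other block of `p`. -/
def GlobalOuter (p : Finset (Finset ℕ × Finset ℕ)) (B : Finset ℕ × Finset ℕ) : Prop :=
  B ∈ p ∧ ¬ ∃ C ∈ p, C ≠ B ∧ Span B ⊂ Span C

/-- The order `≺`: upper single-layer blocks first (by decreasing maximum), then
through-blocks, then lower single-layer blocks (by increasing maximum). -/
def Prec (B C : Finset ℕ × Finset ℕ) : Prop :=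
  (UpperSL B ∧ UpperSL C ∧ ∃ m ∈ B.1, ∀ c ∈ C.1, c < m) ∨
  (UpperSL B ∧ ¬ UpperSL C) ∨
  (LowerSL C ∧ ¬ LowerSL B) ∨
  (LowerSL B ∧ LowerSL C ∧ ∃ m ∈ C.2, ∀ b ∈ B.2, b < m)

/-- Linearisation of the two-row diagram: upper points `1,…,k`, then the lower points
taken right-to-left. -/
def lin (k l : ℕ) (B : Finset ℕ × Finset ℕ) : Finset ℕ :=
  B.1 ∪ B.2.image fun j => k + (l + 1 - j)

-- helpers

lemma notUL {B : Finset ℕ × Finset ℕ} (h : UpperSL B) : ¬ LowerSL B :=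
  fun h' => h.1.ne_empty h'.1

lemma span_through {B : Finset ℕ × Finset ℕ} (h1 : B.1.Nonempty) (h2 : B.2.Nonempty)
    (x : ℕ × ℕ) :
    x ∈ Span B ↔ (x.1 = 0 ∧ 1 ≤ x.2 ∧ x.2 ≤ B.1.max' h1) ∨
      (x.1 = 1 ∧ 1 ≤ x.2 ∧ x.2 ≤ B.2.max' h2) := by
  simp only [Span, Set.mem_setOf_eq]
  constructor
  · rintro (⟨-, -, ⟨hx0, hx1, m, hm, hxm⟩ | ⟨hx0, hx1, m, hm, hxm⟩⟩ | ⟨-, he, -⟩ | ⟨he, -⟩)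
    · exact Or.inl ⟨hx0, hx1, hxm.trans (Finset.le_max' _ _ hm)⟩
    · exact Or.inr ⟨hx0, hx1, hxm.trans (Finset.le_max' _ _ hm)⟩
    · exact absurd he h2.ne_empty
    · exact absurd he h1.ne_empty
  · rintro (⟨hx0, hx1, hxm⟩ | ⟨hx0, hx1, hxm⟩)
    · exact Or.inl ⟨h1, h2, Or.inl ⟨hx0, hx1, _, B.1.max'_mem h1, hxm⟩⟩
    · exact Or.inl ⟨h1, h2, Or.inr ⟨hx0, hx1, _, B.2.max'_mem h2, hxm⟩⟩

section main
variable (k l : ℕ) (p : Finset (Finset ℕ × Finset ℕ))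

/-- if B,C through-blocks, B global-outer, C ∈ p, B ≠ C, max B.1 < max C.1, then
max C.2 < max B.2. -/
lemma outer_lower (hsub : ∀ B ∈ p, B.1 ⊆ Finset.Icc 1 k ∧ B.2 ⊆ Finset.Icc 1 l)
    {B C : Finset ℕ × Finset ℕ} (hB : GlobalOuter p B) (hCp : C ∈ p) (hBC : C ≠ B)
    (hB1 : B.1.Nonempty) (hB2 : B.2.Nonempty) (hC1 : C.1.Nonempty) (hC2 : C.2.Nonempty)
    (hmax : B.1.max' hB1 < C.1.max' hC1) :
    C.2.max' hC2 < B.2.max' hB2 := by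
  by_contra hle
  push_neg at hle
  apply hB.2
  refine ⟨C, hCp, hBC, ?_, ?_⟩
  · intro x hx
    rw [span_through hB1 hB2] at hx
    rw [span_through hC1 hC2]
    rcases hx with ⟨hx0, hx1, hxm⟩ | ⟨hx0, hx1, hxm⟩
    · exact Or.inl ⟨hx0, hx1, hxm.trans hmax.le⟩
    · exact Or.inr ⟨hx0, hx1, hxm.trans hle⟩
  · intro hCB
    have hm := C.1.max'_mem hC1
    have h1 : 1 ≤ C.1.max' hC1 := (Finset.mem_Icc.mp ((hsub C hCp).1 hm)).1
    have : (0, C.1.max' hC1) ∈ Span B := hCB ((span_through hC1 hC2 _).mpr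
      (Or.inl ⟨rfl, h1, le_refl _⟩))
    rw [span_through hB1 hB2] at this
    rcases this with ⟨-, -, hxm⟩ | ⟨h0, -⟩
    · exact absurd hxm (not_le.mpr hmax)
    · simp at h0

/-- two distinct through-blocks with crossing maxima contradict noncrossing. -/
lemma crossing (hsub : ∀ B ∈ p, B.1 ⊆ Finset.Icc 1 k ∧ B.2 ⊆ Finset.Icc 1 l)
    (hnc : ¬ ∃ B ∈ p, ∃ C ∈ p, B ≠ C ∧ ∃ a ∈ lin k l B, ∃ b ∈ lin k l C,
      ∃ c ∈ lin k l B, ∃ d ∈ lin k l C, a < b ∧ b < c ∧ c < d)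
    {B C : Finset ℕ × Finset ℕ} (hBp : B ∈ p) (hCp : C ∈ p) (hBC : B ≠ C)
    (hB1 : B.1.Nonempty) (hB2 : B.2.Nonempty) (hC1 : C.1.Nonempty) (hC2 : C.2.Nonempty)
    (hmax1 : B.1.max' hB1 < C.1.max' hC1) (hmax2 : C.2.max' hC2 < B.2.max' hB2) :
    False := by
  apply hnc
  have hbk : C.1.max' hC1 ≤ k := (Finset.mem_Icc.mp ((hsub C hCp).1 (C.1.max'_mem hC1))).2
  have hBl : B.2.max' hB2 ≤ l := (Finset.mem_Icc.mp ((hsub B hBp).2 (B.2.max'_mem hB2))).2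
  have hC1l : 1 ≤ C.2.max' hC2 := (Finset.mem_Icc.mp ((hsub C hCp).2 (C.2.max'_mem hC2))).1
  refine ⟨B, hBp, C, hCp, hBC, B.1.max' hB1, ?_, C.1.max' hC1, ?_,
    k + (l + 1 - B.2.max' hB2), ?_, k + (l + 1 - C.2.max' hC2), ?_, hmax1, ?_, ?_⟩
  · exact Finset.mem_union_left _ (B.1.max'_mem hB1)
  · exact Finset.mem_union_left _ (C.1.max'_mem hC1)
  · exact Finset.mem_union_right _ (Finset.mem_image.mpr ⟨_, B.2.max'_mem hB2, rfl⟩)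
  · exact Finset.mem_union_right _ (Finset.mem_image.mpr ⟨_, C.2.max'_mem hC2, rfl⟩)
  · omega
  · omega

lemma through_eq (hsub : ∀ B ∈ p, B.1 ⊆ Finset.Icc 1 k ∧ B.2 ⊆ Finset.Icc 1 l)
    (hpartU : ∀ i ∈ Finset.Icc 1 k, ∃! B, B ∈ p ∧ i ∈ B.1)
    (hnc : ¬ ∃ B ∈ p, ∃ C ∈ p, B ≠ C ∧ ∃ a ∈ lin k l B, ∃ b ∈ lin k l C,
      ∃ c ∈ lin k l B, ∃ d ∈ lin k l C, a < b ∧ b < c ∧ c < d)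
    {B C : Finset ℕ × Finset ℕ} (hB : GlobalOuter p B) (hC : GlobalOuter p C)
    (hB1 : B.1.Nonempty) (hB2 : B.2.Nonempty) (hC1 : C.1.Nonempty) (hC2 : C.2.Nonempty) :
    B = C := by
  by_contra hBC
  rcases lt_trichotomy (B.1.max' hB1) (C.1.max' hC1) with h | h | h
  · exact crossing k l p hsub hnc hB.1 hC.1 hBC hB1 hB2 hC1 hC2 h
      (outer_lower k l p hsub hB hC.1 (Ne.symm hBC) hB1 hB2 hC1 hC2 h)
  · -- equal maxima force B = C
    apply hBC
    have hm : B.1.max' hB1 ∈ Finset.Icc 1 k := (hsub B hB.1).1 (B.1.max'_mem hB1)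
    obtain ⟨D, -, hDu⟩ := hpartU _ hm
    have e1 := hDu B ⟨hB.1, B.1.max'_mem hB1⟩
    have e2 := hDu C ⟨hC.1, h ▸ C.1.max'_mem hC1⟩
    rw [e1, e2]
  · exact crossing k l p hsub hnc hC.1 hB.1 (Ne.symm hBC) hC1 hC2 hB1 hB2 h
      (outer_lower k l p hsub hC hB.1 hBC hC1 hC2 hB1 hB2 h)

end main

/-- For a non-crossing partition `p` of `[k] ⊔ [l]`, the relation `≺` is a strict total
order on the set of global-outer blocks of `p`. -/
theorem stmt7 (k l : ℕ) (p : Finset (Finset ℕ × Finset ℕ))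
    (hne : ∀ B ∈ p, B.1.Nonempty ∨ B.2.Nonempty)
    (hsub : ∀ B ∈ p, B.1 ⊆ Finset.Icc 1 k ∧ B.2 ⊆ Finset.Icc 1 l)
    (hpartU : ∀ i ∈ Finset.Icc 1 k, ∃! B, B ∈ p ∧ i ∈ B.1)
    (hpartL : ∀ j ∈ Finset.Icc 1 l, ∃! B, B ∈ p ∧ j ∈ B.2)
    (hnc : ¬ ∃ B ∈ p, ∃ C ∈ p, B ≠ C ∧ ∃ a ∈ lin k l B, ∃ b ∈ lin k l C,
      ∃ c ∈ lin k l B, ∃ d ∈ lin k l C, a < b ∧ b < c ∧ c < d) :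
    IsStrictTotalOrder {B // GlobalOuter p B} fun X Y => Prec X.1 Y.1 := by
  -- not upper & not lower ⇒ through
  have hthrough : ∀ B : Finset ℕ × Finset ℕ, B ∈ p → ¬ UpperSL B → ¬ LowerSL B →
      B.1.Nonempty ∧ B.2.Nonempty := by
    intro B hBp hU hL
    rcases hne B hBp with h1 | h2
    · refine ⟨h1, ?_⟩
      rcases Finset.eq_empty_or_nonempty B.2 with he | hn
      · exact absurd ⟨h1, he⟩ hU
      · exact hn
    · rcases Finset.eq_empty_or_nonempty B.1 with he | hn
      · exact absurd ⟨he, h2⟩ hL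
      · exact ⟨hn, h2⟩
  refine { trichotomous := ?_, irrefl := ?_, trans := ?_ }
  · -- trichotomous
    rintro ⟨B, hB⟩ ⟨C, hC⟩
    dsimp only
    suffices H : Prec B C ∨ (⟨B, hB⟩ : {B // GlobalOuter p B}) = ⟨C, hC⟩ ∨ Prec C B by
      intro h1 h2
      rcases H with h | h | h
      · exact absurd h h1
      · exact h
      · exact absurd h h2
    by_cases hBU : UpperSL B
    · by_cases hCU : UpperSL C
      · rcases lt_trichotomy (B.1.max' hBU.1) (C.1.max' hCU.1) with h | h | h
        · exact Or.inr (Or.inr (Or.inl ⟨hCU, hBU, C.1.max' hCU.1, C.1.max'_mem hCU.1,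
            fun b hb => lt_of_le_of_lt (Finset.le_max' _ _ hb) h⟩))
        · refine Or.inr (Or.inl (Subtype.ext ?_))
          have hm : B.1.max' hBU.1 ∈ Finset.Icc 1 k := (hsub B hB.1).1 (B.1.max'_mem hBU.1)
          obtain ⟨D, -, hDu⟩ := hpartU _ hm
          have e1 := hDu B ⟨hB.1, B.1.max'_mem hBU.1⟩
          have e2 := hDu C ⟨hC.1, h ▸ C.1.max'_mem hCU.1⟩
          exact e1.trans e2.symm
        · exact Or.inl (Or.inl ⟨hBU, hCU, B.1.max' hBU.1, B.1.max'_mem hBU.1,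
            fun c hc => lt_of_le_of_lt (Finset.le_max' _ _ hc) h⟩)
      · exact Or.inl (Or.inr (Or.inl ⟨hBU, hCU⟩))
    · by_cases hCU : UpperSL C
      · exact Or.inr (Or.inr (Or.inr (Or.inl ⟨hCU, hBU⟩)))
      · by_cases hBL : LowerSL B
        · by_cases hCL : LowerSL C
          · rcases lt_trichotomy (B.2.max' hBL.2) (C.2.max' hCL.2) with h | h | h
            · exact Or.inl (Or.inr (Or.inr (Or.inr ⟨hBL, hCL, C.2.max' hCL.2,
                C.2.max'_mem hCL.2, fun b hb => lt_of_le_of_lt (Finset.le_max' _ _ hb) h⟩)))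
            · refine Or.inr (Or.inl (Subtype.ext ?_))
              have hm : B.2.max' hBL.2 ∈ Finset.Icc 1 l := (hsub B hB.1).2 (B.2.max'_mem hBL.2)
              obtain ⟨D, -, hDu⟩ := hpartL _ hm
              have e1 := hDu B ⟨hB.1, B.2.max'_mem hBL.2⟩
              have e2 := hDu C ⟨hC.1, h ▸ C.2.max'_mem hCL.2⟩
              exact e1.trans e2.symm
            · exact Or.inr (Or.inr (Or.inr (Or.inr (Or.inr ⟨hCL, hBL, B.2.max' hBL.2,
                B.2.max'_mem hBL.2, fun c hc => lt_of_le_of_lt (Finset.le_max' _ _ hc) h⟩))))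
          · exact Or.inr (Or.inr (Or.inr (Or.inr (Or.inl ⟨hBL, hCL⟩))))
        · by_cases hCL : LowerSL C
          · exact Or.inl (Or.inr (Or.inr (Or.inl ⟨hCL, hBL⟩)))
          · -- both through
            obtain ⟨hB1, hB2⟩ := hthrough B hB.1 hBU hBL
            obtain ⟨hC1, hC2⟩ := hthrough C hC.1 hCU hCL
            exact Or.inr (Or.inl (Subtype.ext
              (through_eq k l p hsub hpartU hnc hB hC hB1 hB2 hC1 hC2)))
  · -- irrefl
    rintro ⟨B, hB⟩ h
    rcases h with ⟨-, -, m, hm, hlt⟩ | ⟨h1, h2⟩ | ⟨h1, h2⟩ | ⟨-, -, m, hm, hlt⟩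
    · exact lt_irrefl m (hlt m hm)
    · exact h2 h1
    · exact h2 h1
    · exact lt_irrefl m (hlt m hm)
  · -- trans
    rintro ⟨B, hB⟩ ⟨C, hC⟩ ⟨D, hD⟩ h1 h2
    dsimp only at h1 h2 ⊢
    rcases h1 with ⟨hBU, hCU, m, hm, hlt⟩ | ⟨hBU, hCnU⟩ | ⟨hCL, hBnL⟩ | ⟨hBL, hCL, m, hm, hlt⟩ <;>
      rcases h2 with ⟨hCU', hDU, m', hm', hlt'⟩ | ⟨hCU', hDnU⟩ | ⟨hDL, hCnL⟩ | ⟨hCL', hDL, m', hm', hlt'⟩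
    · exact Or.inl ⟨hBU, hDU, m, hm, fun d hd => (hlt' d hd).trans (hlt m' hm')⟩
    · exact Or.inr (Or.inl ⟨hBU, hDnU⟩)
    · exact Or.inr (Or.inr (Or.inl ⟨hDL, notUL hBU⟩))
    · exact absurd hCL' (notUL hCU)
    · exact absurd hCU' hCnU
    · exact absurd hCU' hCnU
    · exact Or.inr (Or.inr (Or.inl ⟨hDL, notUL hBU⟩))
    · exact Or.inr (Or.inr (Or.inl ⟨hDL, notUL hBU⟩))
    · exact absurd hCL (notUL hCU')
    · exact absurd hCL (notUL hCU')
    · exact absurd hCL hCnL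
    · exact Or.inr (Or.inr (Or.inl ⟨hDL, hBnL⟩))
    · exact absurd hCL (notUL hCU')
    · exact absurd hCL (notUL hCU')
    · exact absurd hCL hCnL
    · exact Or.inr (Or.inr (Or.inr ⟨hBL, hDL, m', hm', fun b hb => (hlt b hb).trans (hlt' m hm)⟩))

end Stmt7
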